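/- Noncommutative Vandermonde factorization for degree 2: for x₁, x₂, z in a ring with x₂ - x₁ invertible, the Vandermonde quasideterminant V(x₁,x₂,z) = z² - (y₁+y₂)z + y₂y₁ where y₁ = x₁ and y₂ = (x₂-x₁)x₂(x₂-x₁)^{-1}. In particular, V(x₁,x₂,x₁) = 0 and V(x₁,x₂,x₂) = 0, i.e. x₁ and x₂ are both roots of the left polynomial z² - (y₁+y₂)z + y₂y₁. -/
import Mathlib


/-- Noncommutative Vandermonde factorization for degree 2: with `y₁ = x₁`,
`y₂ = (x₂-x₁)x₂(x₂-x₁)⁻¹` and `V z = z² - (y₁+y₂)z + y₂y₁`, one has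
`V x₁ = 0`, `V x₂ = 0`, and `V z` agrees with the Vandermonde quasideterminant
`z² - (x₁², x₂²)·[[x₁,x₂],[1,1]]⁻¹·(z,1)ᵀ`. -/
theorem vandermonde_quasideterminant_deg2 (R : Type*) [Ring R] (x1 x2 : R)
    [Invertible (x2 - x1)] (B : Matrix (Fin 2) (Fin 2) R)
    (hB1 : (!![x1, x2; 1, 1] : Matrix (Fin 2) (Fin 2) R) * B = 1)
    (hB2 : B * (!![x1, x2; 1, 1] : Matrix (Fin 2) (Fin 2) R) = 1) :
    (x1 ^ 2 - (x1 + (x2 - x1) * x2 * ⅟(x2 - x1)) * x1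
        + (x2 - x1) * x2 * ⅟(x2 - x1) * x1 = 0) ∧
    (x2 ^ 2 - (x1 + (x2 - x1) * x2 * ⅟(x2 - x1)) * x2
        + (x2 - x1) * x2 * ⅟(x2 - x1) * x1 = 0) ∧
    (∀ z : R,
      z ^ 2 - (x1 + (x2 - x1) * x2 * ⅟(x2 - x1)) * z
          + (x2 - x1) * x2 * ⅟(x2 - x1) * x1
        = z ^ 2 - (x1 ^ 2 * (B 0 0 * z + B 0 1) + x2 ^ 2 * (B 1 0 * z + B 1 1))) := by
  have hsa : (x2 - x1) * ⅟(x2 - x1) = 1 := mul_invOf_self _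
  have has : ⅟(x2 - x1) * (x2 - x1) = 1 := invOf_mul_self _
  refine ⟨by noncomm_ring, ?_, ?_⟩
  · have h : x2 ^ 2 - (x1 + (x2 - x1) * x2 * ⅟(x2 - x1)) * x2
        + (x2 - x1) * x2 * ⅟(x2 - x1) * x1
        = (x2 - x1) * x2 * (1 - ⅟(x2 - x1) * (x2 - x1)) := by noncomm_ring
    rw [h, has]
    simp
  · -- `C` is the explicit two-sided inverse of the Vandermonde matrix
    set C : Matrix (Fin 2) (Fin 2) R :=
      !![-⅟(x2 - x1), ⅟(x2 - x1) * x2; ⅟(x2 - x1), 1 - ⅟(x2 - x1) * x2] with hCdef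
    have hC : C * (!![x1, x2; 1, 1] : Matrix (Fin 2) (Fin 2) R) = 1 := by
      ext i j
      fin_cases i <;> fin_cases j <;>
        simp [hCdef, Matrix.mul_apply, Fin.sum_univ_two, Matrix.one_apply]
      · rw [show -(⅟(x2 - x1) * x1) + ⅟(x2 - x1) * x2
            = ⅟(x2 - x1) * (x2 - x1) from by noncomm_ring, has]
      · rw [show ⅟(x2 - x1) * x1 + (1 - ⅟(x2 - x1) * x2)
            = 1 - ⅟(x2 - x1) * (x2 - x1) from by noncomm_ring, has, sub_self]
    have hBC : B = C := by
      have h : C * (!![x1, x2; 1, 1] * B) = C := by rw [hB1, Matrix.mul_one]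
      rw [← Matrix.mul_assoc, hC, Matrix.one_mul] at h
      exact h
    intro z
    have e00 : B 0 0 = -⅟(x2 - x1) := by rw [hBC]; simp [hCdef]
    have e01 : B 0 1 = ⅟(x2 - x1) * x2 := by rw [hBC]; simp [hCdef]
    have e10 : B 1 0 = ⅟(x2 - x1) := by rw [hBC]; simp [hCdef]
    have e11 : B 1 1 = 1 - ⅟(x2 - x1) * x2 := by rw [hBC]; simp [hCdef]
    rw [e00, e01, e10, e11]
    have key : (z ^ 2 - (x1 + (x2 - x1) * x2 * ⅟(x2 - x1)) * z
          + (x2 - x1) * x2 * ⅟(x2 - x1) * x1)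
        - (z ^ 2 - (x1 ^ 2 * (-⅟(x2 - x1) * z + ⅟(x2 - x1) * x2)
            + x2 ^ 2 * (⅟(x2 - x1) * z + (1 - ⅟(x2 - x1) * x2))))
        = x1 * ((x2 - x1) * ⅟(x2 - x1) - 1) * z
          - x1 * ((x2 - x1) * ⅟(x2 - x1) - 1) * x2
          - (x2 - x1) * x2 * (⅟(x2 - x1) * (x2 - x1) - 1) := by
      noncomm_ring
    rw [hsa, has] at key
    simp only [sub_self, mul_zero, zero_mul, neg_zero, add_zero, zero_add, sub_zero,
      zero_sub, neg_neg] at key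
    exact sub_eq_zero.mp key
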